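/- Suppose F(z) = Σ_{m=0}^∞ a_m e^{2πimz/λ} converges on the upper half-plane, F is holomorphic there, and |F(z)| ≤ C(|z|^α + y^{-β}) for all z = x + iy with y > 0, for some constants C, α, β > 0. Then the Fourier coefficients satisfy a_m = O(m^β) as m → ∞. -/

import Mathlib

open Complex Filter Asymptotics intervalIntegral
open scoped Real

/-- If `F(z) = Σ_{m≥0} a_m e^{2πimz/λ}` is holomorphic on the upper half-plane and satisfies
the growth condition `|F(z)| ≤ C (|z|^α + y^{-β})` for `z = x + iy`, `y > 0`, then the Fourier
coefficients satisfy `a_m = O(m^β)` as `m → ∞`. -/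
theorem fourier_coeff_growth (lam : ℝ) (hlam : 0 < lam) (a : ℕ → ℂ) (F : ℂ → ℂ)
    (C α β : ℝ) (hC : 0 < C) (hα : 0 < α) (hβ : 0 < β)
    (hol : DifferentiableOn ℂ F {z : ℂ | 0 < z.im})
    (hsum : ∀ z : ℂ, 0 < z.im →
      HasSum (fun m : ℕ => a m * Complex.exp (2 * π * Complex.I * m * z / lam)) (F z))
    (hbound : ∀ z : ℂ, 0 < z.im → ‖F z‖ ≤ C * (‖z‖ ^ α + z.im ^ (-β : ℝ))) :
    (fun m : ℕ => a m) =O[atTop] (fun m : ℕ => (m : ℝ) ^ β) := by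
  have hlam' : (lam : ℂ) ≠ 0 := Complex.ofReal_ne_zero.mpr hlam.ne'
  -- Key estimate: for every `m` and `y > 0`,
  -- `‖a m‖ ≤ exp (2πmy/λ) * C * ((λ+y)^α + y^(-β))`.
  have key : ∀ (m : ℕ) (y : ℝ), 0 < y →
      ‖a m‖ ≤ Real.exp (2 * π * m * y / lam) *
        (C * ((lam + y) ^ α + y ^ (-β : ℝ))) := by
    intro m y hy
    set g : ℕ → ℝ → ℂ := fun n x =>
      (a n * Real.exp (-(2 * π * n * y / lam))) *
        Complex.exp ((2 * π * Complex.I * ((n : ℂ) - (m : ℂ)) / lam) * x) with hg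
    have hsplit : ∀ (n : ℕ) (x : ℝ),
        a n * Complex.exp (2 * π * Complex.I * n * ((x : ℂ) + (y : ℂ) * Complex.I) / lam) *
          Complex.exp (-(2 * π * Complex.I * m * x) / lam) = g n x := by
      intro n x
      have e1 : ∀ u v : ℂ, a n * Complex.exp u * Complex.exp v
          = a n * Complex.exp (u + v) := fun u v => by rw [mul_assoc, ← Complex.exp_add]
      rw [hg]
      simp only
      rw [Complex.ofReal_exp, e1, e1]
      congr 2
      push_cast
      linear_combination (2 * (π : ℂ) * n * y / lam) * Complex.I_sq
    have hnormg : ∀ (n : ℕ) (x : ℝ),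
        ‖g n x‖ = ‖a n‖ * Real.exp (-(2 * π * n * y / lam)) := by
      intro n x
      have h2 : (2 * π * Complex.I * ((n : ℂ) - (m : ℂ)) / lam) * x
          = ((2 * π * ((n : ℝ) - (m : ℝ)) * x / lam : ℝ) : ℂ) * Complex.I := by
        push_cast; ring
      rw [hg]
      simp only
      simp only [norm_mul, h2, Complex.norm_real, Real.norm_eq_abs, Real.abs_exp,
        Complex.norm_exp_ofReal_mul_I, mul_one]
    -- summability of the coefficients sequence
    have hS1 : Summable fun n : ℕ => ‖a n‖ * Real.exp (-(2 * π * n * y / lam)) := by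
      have him : ((y : ℂ) * Complex.I).im = y := by simp
      have hS0 := (hsum ((y : ℂ) * Complex.I) (by rw [him]; exact hy)).summable
      refine (summable_norm_iff.mpr hS0).congr fun n => ?_
      have h3 : 2 * π * Complex.I * n * ((y : ℂ) * Complex.I) / lam
          = ((-(2 * π * n * y / lam) : ℝ) : ℂ) := by
        push_cast
        linear_combination (2 * (π : ℂ) * n * y / lam) * Complex.I_sq
      rw [norm_mul, h3]
      rw [Complex.norm_exp_ofReal]
    have hgint : ∀ n : ℕ, MeasureTheory.IntegrableOn (g n) (Set.Ioc 0 lam) := by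
      intro n
      apply Continuous.integrableOn_Ioc
      fun_prop
    have hvol : (MeasureTheory.volume (Set.Ioc (0:ℝ) lam)).toReal = lam := by
      simp [Real.volume_Ioc, ENNReal.toReal_ofReal hlam.le]
    have hnormint : ∀ n : ℕ, ∫ x in Set.Ioc (0:ℝ) lam, ‖g n x‖
        = (‖a n‖ * Real.exp (-(2 * π * n * y / lam))) * lam := by
      intro n
      simp only [hnormg]
      rw [MeasureTheory.setIntegral_const, smul_eq_mul, MeasureTheory.measureReal_def, hvol, mul_comm]
    have hsumint : Summable fun n : ℕ => ∫ x in Set.Ioc (0:ℝ) lam, ‖g n x‖ := by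
      simp only [hnormint]
      exact hS1.mul_right lam
    -- swap the sum and the integral
    have hswap : ∑' n : ℕ, ∫ x in Set.Ioc (0:ℝ) lam, g n x
        = ∫ x in Set.Ioc (0:ℝ) lam,
            F ((x : ℂ) + (y : ℂ) * Complex.I) *
              Complex.exp (-(2 * π * Complex.I * m * x) / lam) := by
      rw [MeasureTheory.integral_tsum_of_summable_integral_norm hgint hsumint]
      refine MeasureTheory.integral_congr_ae (Filter.Eventually.of_forall fun x => ?_)
      have him : ((x : ℂ) + (y : ℂ) * Complex.I).im = y := by simp
      have hF := (hsum ((x : ℂ) + (y : ℂ) * Complex.I) (by rw [him]; exact hy)).tsum_eq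
      dsimp only
      rw [← hF, ← tsum_mul_right]
      exact tsum_congr fun n => (hsplit n x).symm
    -- evaluate the sum of integrals
    have heval : ∑' n : ℕ, ∫ x in Set.Ioc (0:ℝ) lam, g n x
        = (a m * (Real.exp (-(2 * π * m * y / lam)) : ℝ)) * (lam : ℂ) := by
      rw [tsum_eq_single m ?_]
      · have hgm : ∀ x : ℝ, g m x = a m * (Real.exp (-(2 * π * m * y / lam)) : ℝ) := by
          intro x
          rw [hg]
          simp
        simp only [hgm]
        rw [MeasureTheory.setIntegral_const]
        rw [MeasureTheory.measureReal_def, hvol, real_smul]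
        ring
      · intro n hn
        have hnm : ((n : ℂ) - (m : ℂ)) ≠ 0 := sub_ne_zero.mpr (by exact_mod_cast hn)
        have hc : (2 * π * Complex.I * ((n : ℂ) - (m : ℂ)) / lam) ≠ 0 := by
          apply div_ne_zero _ hlam'
          have h2π : (2 * (π : ℂ) * Complex.I) ≠ 0 := by
            simp [Real.pi_ne_zero, Complex.I_ne_zero, Complex.ofReal_ne_zero]
          exact mul_ne_zero h2π hnm
        rw [← intervalIntegral.integral_of_le hlam.le]
        rw [hg]
        simp only
        rw [intervalIntegral.integral_const_mul, integral_exp_mul_complex hc]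
        have h1 : Complex.exp ((2 * π * Complex.I * ((n : ℂ) - (m : ℂ)) / lam) * lam) = 1 := by
          rw [div_mul_cancel₀ _ hlam']
          have h2 : (2 * (π : ℂ) * Complex.I * ((n : ℂ) - (m : ℂ)))
              = (((n : ℤ) - (m : ℤ) : ℤ) : ℂ) * (2 * π * Complex.I) := by push_cast; ring
          rw [h2, Complex.exp_int_mul_two_pi_mul_I]
        rw [h1]
        simp
    -- the integral bound
    have hb : ‖∫ x in Set.Ioc (0:ℝ) lam,
        F ((x : ℂ) + (y : ℂ) * Complex.I) *
          Complex.exp (-(2 * π * Complex.I * m * x) / lam)‖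
        ≤ (C * ((lam + y) ^ α + y ^ (-β : ℝ))) * lam := by
      rw [← intervalIntegral.integral_of_le hlam.le]
      have hstep := intervalIntegral.norm_integral_le_of_norm_le_const
        (a := (0:ℝ)) (b := lam) (C := C * ((lam + y) ^ α + y ^ (-β : ℝ)))
        (f := fun x : ℝ => F ((x : ℂ) + (y : ℂ) * Complex.I) *
          Complex.exp (-(2 * π * Complex.I * m * (x : ℂ)) / lam)) ?_
      · calc ‖_‖ ≤ C * ((lam + y) ^ α + y ^ (-β : ℝ)) * |lam - 0| := hstep
          _ = (C * ((lam + y) ^ α + y ^ (-β : ℝ))) * lam := by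
            rw [sub_zero, abs_of_pos hlam]
      · intro x hx
        rw [Set.uIoc_of_le hlam.le] at hx
        obtain ⟨hx0, hxl⟩ := hx
        have him : ((x : ℂ) + (y : ℂ) * Complex.I).im = y := by simp
        have hnz : 0 < ((x : ℂ) + (y : ℂ) * Complex.I).im := by rw [him]; exact hy
        rw [norm_mul]
        have h1 : ‖Complex.exp (-(2 * π * Complex.I * m * (x : ℂ)) / lam)‖ = 1 := by
          have h2 : (-(2 * π * Complex.I * m * (x : ℂ)) / lam)
              = ((-(2 * π * m * x / lam) : ℝ) : ℂ) * Complex.I := by push_cast; ring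
          rw [h2, Complex.norm_exp]
          simp
        rw [h1, mul_one]
        refine (hbound _ hnz).trans ?_
        rw [him]
        have hz : ‖(x : ℂ) + (y : ℂ) * Complex.I‖ ≤ lam + y := by
          calc ‖(x : ℂ) + (y : ℂ) * Complex.I‖ ≤ ‖(x : ℂ)‖ + ‖(y : ℂ) * Complex.I‖ :=
              norm_add_le _ _
            _ = |x| + |y| := by simp
            _ ≤ lam + y := by
              rw [abs_of_pos hx0, abs_of_pos hy]
              exact add_le_add hxl le_rfl
        gcongr
    -- combine
    have hA : ‖a m‖ * (Real.exp (-(2 * π * m * y / lam)) * lam)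
        ≤ (C * ((lam + y) ^ α + y ^ (-β : ℝ))) * lam := by
      have h2 := hb
      rw [← hswap, heval] at h2
      calc ‖a m‖ * (Real.exp (-(2 * π * m * y / lam)) * lam)
          = ‖(a m * (Real.exp (-(2 * π * m * y / lam)) : ℝ)) * (lam : ℂ)‖ := by
            rw [norm_mul, norm_mul, Complex.norm_real, Complex.norm_real,
              Real.norm_eq_abs, Real.norm_eq_abs, Real.abs_exp, abs_of_pos hlam]
            ring
        _ ≤ _ := h2
    have hpos : 0 < Real.exp (-(2 * π * m * y / lam)) * lam := by positivity
    refine le_of_mul_le_mul_right ?_ hpos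
    calc ‖a m‖ * (Real.exp (-(2 * π * m * y / lam)) * lam)
        ≤ (C * ((lam + y) ^ α + y ^ (-β : ℝ))) * lam := hA
      _ = Real.exp (2 * π * m * y / lam) * (C * ((lam + y) ^ α + y ^ (-β : ℝ))) *
          (Real.exp (-(2 * π * m * y / lam)) * lam) := by
          rw [Real.exp_neg]
          field_simp
  -- conclude the big-O statement
  rw [isBigO_iff]
  refine ⟨Real.exp (2 * π) * (C * ((2 * lam) ^ α + lam ^ (-β : ℝ))), ?_⟩
  filter_upwards [eventually_ge_atTop 1] with m hm
  have hm0 : (0 : ℝ) < m := by exact_mod_cast hm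
  have hm1 : (1 : ℝ) ≤ m := by exact_mod_cast hm
  have hy : 0 < lam / m := by positivity
  have h := key m (lam / m) hy
  have e1 : 2 * π * m * (lam / m) / lam = 2 * π := by
    field_simp
  rw [e1] at h
  have e2 : (lam / m : ℝ) ^ (-β : ℝ) = lam ^ (-β : ℝ) * (m : ℝ) ^ β := by
    rw [Real.div_rpow hlam.le hm0.le, Real.rpow_neg hm0.le, div_eq_mul_inv, inv_inv]
  have hmb1 : (1 : ℝ) ≤ (m : ℝ) ^ β := by
    calc (1 : ℝ) = (1 : ℝ) ^ β := (Real.one_rpow β).symm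
      _ ≤ (m : ℝ) ^ β := Real.rpow_le_rpow zero_le_one hm1 hβ.le
  have h3 : (lam + lam / m) ^ α ≤ (2 * lam) ^ α := by
    apply Real.rpow_le_rpow (by positivity) ?_ hα.le
    have hd : lam / m ≤ lam := by
      rw [div_le_iff₀ hm0]
      nlinarith
    linarith
  have hnorm : ‖(m : ℝ) ^ β‖ = (m : ℝ) ^ β := by
    rw [Real.norm_eq_abs, _root_.abs_of_nonneg (Real.rpow_nonneg hm0.le β)]
  calc ‖a m‖ ≤ Real.exp (2 * π) *
        (C * ((lam + lam / m) ^ α + lam ^ (-β : ℝ) * (m : ℝ) ^ β)) := by rw [← e2]; exact h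
    _ ≤ Real.exp (2 * π) *
        (C * ((2 * lam) ^ α * (m : ℝ) ^ β + lam ^ (-β : ℝ) * (m : ℝ) ^ β)) := by
        gcongr
        exact h3.trans (le_mul_of_one_le_right (by positivity) hmb1)
    _ = Real.exp (2 * π) * (C * ((2 * lam) ^ α + lam ^ (-β : ℝ))) * ((m : ℝ) ^ β) := by ring
    _ ≤ Real.exp (2 * π) * (C * ((2 * lam) ^ α + lam ^ (-β : ℝ))) * ‖(m : ℝ) ^ β‖ := by
        rw [hnorm]
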